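/- Let X = {x_1, ..., x_n} be samples in R^m, of which a subset of size p are designated positive samples, let l : R -> R be a surrogate function (convex, nonnegative, nondecreasing, with l(0) = 1) that is differentiable at 0, let lambda >= 0, and let k be a positive integer with k <= p. Define the TopMean objective f(w) = (1/p) * sum over positive samples x of l(t(w) - <w, x>) + (lambda/2) * ||w||^2, where t(w) is the mean of the k largest scores among <w, x_1>, ..., <w, x_n>. Then f(0) <= f(w) for every w in R^m, i.e., w = 0 is a global minimizer of f. (This is the case k = ceil(n*tau) with n^+ >= n*tau.) -/

import Mathlib

open scoped InnerProductSpace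

/-- The sum of the `k` largest elements of a finite multiset of reals
(counted with multiplicity). -/
noncomputable def sumTopK (s : Multiset ℝ) (k : ℕ) : ℝ :=
  ((s.sort (· ≤ ·)).drop (Multiset.card s - k)).sum

/-- The mean of the `k` largest elements of a finite multiset of reals. -/
noncomputable def meanTopK (s : Multiset ℝ) (k : ℕ) : ℝ :=
  sumTopK s k / k

lemma sorted_take_le_drop {L : List ℝ} (hL : L.Pairwise (· ≤ ·)) {d : ℕ}
    {a b : ℝ} (ha : a ∈ L.take d) (hb : b ∈ L.drop d) : a ≤ b := by
  have h := hL
  rw [← List.take_append_drop d L, List.pairwise_append] at h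
  exact h.2.2 a ha b hb

lemma sublist_sum_le {L T : List ℝ} (hT : List.Sublist T L) :
    L.Pairwise (· ≤ ·) → T.sum ≤ (L.drop (L.length - T.length)).sum := by
  induction hT with
  | slnil => intro _; simp
  | @cons l₁ l₂ a h ih =>
    intro hL
    have hlen := h.length_le
    have he : (a :: l₂).length - l₁.length = (l₂.length - l₁.length) + 1 := by
      simp only [List.length_cons]; omega
    rw [he, List.drop_succ_cons]
    exact ih (List.pairwise_cons.mp hL).2
  | @cons_cons l₁ l₂ a h ih =>
    intro hL
    have hlen := h.length_le
    have hL2 := (List.pairwise_cons.mp hL).2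
    have hale := (List.pairwise_cons.mp hL).1
    have ih' := ih hL2
    have he : (a :: l₂).length - (a :: l₁).length = l₂.length - l₁.length := by
      simp only [List.length_cons]; omega
    rw [he]
    rcases Nat.eq_zero_or_pos (l₂.length - l₁.length) with h0 | hpos
    · rw [h0, List.drop_zero, List.sum_cons, List.sum_cons]
      rw [h0, List.drop_zero] at ih'
      linarith
    · obtain ⟨d, hd⟩ : ∃ d, l₂.length - l₁.length = d + 1 :=
        ⟨l₂.length - l₁.length - 1, by omega⟩
      have hdlt : d < l₂.length := by omega
      rw [hd, List.drop_succ_cons, List.drop_eq_getElem_cons hdlt, List.sum_cons,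
        List.sum_cons]
      have hmem : l₂[d] ∈ l₂ := List.getElem_mem hdlt
      have ha2 : a ≤ l₂[d] := hale _ hmem
      rw [hd] at ih'
      linarith

lemma sum_le_sumTopK {t s : Multiset ℝ} (h : t ≤ s) :
    t.sum ≤ sumTopK s (Multiset.card t) := by
  have h2 : ((t.sort (· ≤ ·) : List ℝ) : Multiset ℝ) ≤ ((s.sort (· ≤ ·) : List ℝ) : Multiset ℝ) := by
    rwa [Multiset.sort_eq, Multiset.sort_eq]
  rw [Multiset.coe_le] at h2
  obtain ⟨T, hperm, hsub⟩ := h2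
  have hsorted : (s.sort (· ≤ ·)).Pairwise (· ≤ ·) := Multiset.pairwise_sort _ _
  have hkey := sublist_sum_le hsub hsorted
  have hTsum : T.sum = t.sum := by
    rw [hperm.sum_eq]
    conv_rhs => rw [← Multiset.sort_eq t (· ≤ ·)]
    rw [Multiset.sum_coe]
  have hTlen : T.length = Multiset.card t := by
    rw [hperm.length_eq, Multiset.length_sort]
  rw [hTsum, hTlen, Multiset.length_sort] at hkey
  exact hkey

lemma sumTopK_div_anti {s : Multiset ℝ} {k p : ℕ} (hk : 1 ≤ k) (hkp : k ≤ p)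
    (hp : p ≤ Multiset.card s) : sumTopK s p / p ≤ sumTopK s k / k := by
  set L := s.sort (· ≤ ·) with hLdef
  have hL : L.Pairwise (· ≤ ·) := Multiset.pairwise_sort _ _
  have hlen : L.length = Multiset.card s := Multiset.length_sort _
  set n := Multiset.card s with hn
  set B := L.drop (n - k) with hB
  set A := (L.drop (n - p)).take (p - k) with hA
  have hBlen : B.length = k := by rw [hB, List.length_drop, hlen]; omega
  have hAlen : A.length = p - k := by
    rw [hA, List.length_take, List.length_drop, hlen]; omega
  have hsplit : L.drop (n - p) = A ++ B := by
    have h1 : A ++ (L.drop (n - p)).drop (p - k) = L.drop (n - p) :=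
      List.take_append_drop _ _
    have h2 : (L.drop (n - p)).drop (p - k) = L.drop (n - k) := by
      rw [List.drop_drop]
      congr 1
      omega
    rw [← h1, h2, hB]
  have hBne : B ≠ [] := by
    intro hnil; rw [hnil] at hBlen; simp at hBlen; omega
  obtain ⟨c, B', hcons⟩ := List.exists_cons_of_ne_nil hBne
  have hBsorted : B.Pairwise (· ≤ ·) := hL.drop
  have hcB : c ∈ B := by rw [hcons]; exact List.mem_cons_self
  have hcle : ∀ b ∈ B, c ≤ b := by
    intro b hb
    rw [hcons] at hb hBsorted
    rcases List.mem_cons.mp hb with rfl | hb'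
    · exact le_refl _
    · exact (List.pairwise_cons.mp hBsorted).1 _ hb'
  have hAle : ∀ a ∈ A, a ≤ c := by
    intro a ha
    have hA' : A = (L.take (n - k)).drop (n - p) := by
      rw [hA, List.drop_take]
      congr 1
      omega
    rw [hA'] at ha
    have ha2 : a ∈ L.take (n - k) := List.drop_subset _ _ ha
    exact sorted_take_le_drop hL ha2 hcB
  have hAsum' : A.sum ≤ ((p : ℝ) - k) * c := by
    have h1 := List.sum_le_card_nsmul A c hAle
    rw [hAlen, nsmul_eq_mul] at h1
    calc A.sum ≤ ((p - k : ℕ) : ℝ) * c := h1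
      _ = ((p : ℝ) - k) * c := by rw [Nat.cast_sub hkp]
  have hBsum' : (k : ℝ) * c ≤ B.sum := by
    have h2 := List.card_nsmul_le_sum B c hcle
    rwa [hBlen, nsmul_eq_mul] at h2
  have hsum_p : sumTopK s p = A.sum + B.sum := by
    show (L.drop (n - p)).sum = A.sum + B.sum
    rw [hsplit, List.sum_append]
  have hsum_k : sumTopK s k = B.sum := rfl
  have hk' : (0 : ℝ) < k := by exact_mod_cast hk
  have hp' : (0 : ℝ) < p := by
    have : (1 : ℕ) ≤ p := le_trans hk hkp
    exact_mod_cast this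
  have hkp' : (k : ℝ) ≤ p := by exact_mod_cast hkp
  rw [div_le_div_iff₀ hp' hk', hsum_p, hsum_k]
  nlinarith [mul_le_mul_of_nonneg_left hBsum' (sub_nonneg.mpr hkp'),
    mul_le_mul_of_nonneg_right hAsum' (le_of_lt hk')]

/-- for the TopMean objective, whose threshold is the mean of the `k` largest
scores over *all* samples, if `k` is at most the number of positive samples then `w = 0` is a
global minimizer. -/
theorem topmean_zero_global_min {m n : ℕ}
    (x : Fin n → EuclideanSpace ℝ (Fin m)) (P : Finset (Fin n))
    (l : ℝ → ℝ) (hl_conv : ConvexOn ℝ Set.univ l) (hl_nonneg : ∀ z, 0 ≤ l z)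
    (hl_mono : Monotone l) (hl_zero : l 0 = 1) (hl_diff : DifferentiableAt ℝ l 0)
    (lam : ℝ) (hlam : 0 ≤ lam)
    (k : ℕ) (hk1 : 1 ≤ k) (hkP : k ≤ P.card) :
    ∀ w : EuclideanSpace ℝ (Fin m),
      (1 / (P.card : ℝ)) * ∑ i ∈ P,
          l (meanTopK (Multiset.map (fun j => ⟪(0 : EuclideanSpace ℝ (Fin m)), x j⟫_ℝ)
              Finset.univ.val) k - ⟪(0 : EuclideanSpace ℝ (Fin m)), x i⟫_ℝ)
        + lam / 2 * ‖(0 : EuclideanSpace ℝ (Fin m))‖ ^ 2 ≤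
      (1 / (P.card : ℝ)) * ∑ i ∈ P,
          l (meanTopK (Multiset.map (fun j => ⟪w, x j⟫_ℝ) Finset.univ.val) k - ⟪w, x i⟫_ℝ)
        + lam / 2 * ‖w‖ ^ 2 := by
  intro w
  have hpcard : 0 < P.card := lt_of_lt_of_le (Nat.lt_of_lt_of_le Nat.zero_lt_one hk1) hkP
  have hpR : (0 : ℝ) < P.card := by exact_mod_cast hpcard
  -- LHS equals 1
  have hzero : meanTopK (Multiset.map (fun j => ⟪(0 : EuclideanSpace ℝ (Fin m)), x j⟫_ℝ)
      Finset.univ.val) k = 0 := by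
    have hmap : Multiset.map (fun j => ⟪(0 : EuclideanSpace ℝ (Fin m)), x j⟫_ℝ)
        Finset.univ.val = Multiset.map (fun _ : Fin n => (0 : ℝ)) Finset.univ.val := by
      simp [inner_zero_left]
    rw [hmap]
    unfold meanTopK sumTopK
    have hall : ∀ y ∈ ((Multiset.map (fun _ : Fin n => (0:ℝ)) Finset.univ.val).sort (· ≤ ·)).drop
        (Multiset.card (Multiset.map (fun _ : Fin n => (0:ℝ)) Finset.univ.val) - k), y = 0 := by
      intro y hy
      have hy2 : y ∈ (Multiset.map (fun _ : Fin n => (0:ℝ)) Finset.univ.val).sort (· ≤ ·) :=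
        List.drop_subset _ _ hy
      rw [Multiset.mem_sort] at hy2
      obtain ⟨j, _, hj⟩ := Multiset.mem_map.mp hy2
      exact hj.symm
    rw [List.sum_eq_zero hall, zero_div]
  have hLHS : (1 / (P.card : ℝ)) * ∑ i ∈ P,
      l (meanTopK (Multiset.map (fun j => ⟪(0 : EuclideanSpace ℝ (Fin m)), x j⟫_ℝ)
          Finset.univ.val) k - ⟪(0 : EuclideanSpace ℝ (Fin m)), x i⟫_ℝ)
        + lam / 2 * ‖(0 : EuclideanSpace ℝ (Fin m))‖ ^ 2 = 1 := by
    rw [hzero]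
    simp only [inner_zero_left, sub_zero, hl_zero, norm_zero]
    rw [Finset.sum_const, nsmul_eq_mul, mul_one]
    field_simp
    norm_num
  rw [hLHS]
  -- abbreviations
  set t := meanTopK (Multiset.map (fun j => ⟪w, x j⟫_ℝ) Finset.univ.val) k with ht
  set S := Multiset.map (fun j => ⟪w, x j⟫_ℝ) Finset.univ.val with hS
  have hcardS : Multiset.card S = n := by
    rw [hS, Multiset.card_map]
    exact (Finset.card_univ (α := Fin n)).trans (Fintype.card_fin n)
  have hsub : Multiset.map (fun j => ⟪w, x j⟫_ℝ) P.val ≤ S := by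
    rw [hS]
    exact Multiset.map_le_map (Finset.val_le_iff.mpr (Finset.subset_univ P))
  have hsum1 : (∑ i ∈ P, ⟪w, x i⟫_ℝ) ≤ sumTopK S P.card := by
    have h3 := sum_le_sumTopK hsub
    rw [Multiset.card_map] at h3
    rw [Finset.sum_eq_multiset_sum]
    exact h3
  have hPn : P.card ≤ n := by
    have := Finset.card_le_univ P
    simpa using this
  have hdiv : sumTopK S P.card / P.card ≤ sumTopK S k / k :=
    sumTopK_div_anti hk1 hkP (by rw [hcardS]; exact hPn)
  have ht2 : t = sumTopK S k / (k : ℝ) := rfl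
  have hkey : (∑ i ∈ P, ⟪w, x i⟫_ℝ) / P.card ≤ t := by
    rw [ht2]
    refine le_trans ?_ hdiv
    gcongr
  -- Jensen
  have hjensen : l ((1 / (P.card : ℝ)) • ∑ i ∈ P, (t - ⟪w, x i⟫_ℝ)) ≤
      ∑ i ∈ P, (1 / (P.card : ℝ)) • l (t - ⟪w, x i⟫_ℝ) := by
    rw [Finset.smul_sum]
    exact hl_conv.map_sum_le (t := P) (w := fun _ => 1 / (P.card : ℝ))
      (p := fun i => t - ⟪w, x i⟫_ℝ) (fun i _ => by positivity)
      (by rw [Finset.sum_const, nsmul_eq_mul]; field_simp)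
      (fun i _ => Set.mem_univ _)
  have harg : (1 / (P.card : ℝ)) • ∑ i ∈ P, (t - ⟪w, x i⟫_ℝ) =
      t - (∑ i ∈ P, ⟪w, x i⟫_ℝ) / P.card := by
    rw [Finset.sum_sub_distrib, Finset.sum_const, nsmul_eq_mul, smul_eq_mul]
    field_simp
  have hmono : 1 ≤ l ((1 / (P.card : ℝ)) • ∑ i ∈ P, (t - ⟪w, x i⟫_ℝ)) := by
    rw [harg, ← hl_zero]
    exact hl_mono (by linarith)
  have hfinal : 1 ≤ (1 / (P.card : ℝ)) * ∑ i ∈ P, l (t - ⟪w, x i⟫_ℝ) := by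
    calc (1 : ℝ) ≤ l ((1 / (P.card : ℝ)) • ∑ i ∈ P, (t - ⟪w, x i⟫_ℝ)) := hmono
    _ ≤ ∑ i ∈ P, (1 / (P.card : ℝ)) • l (t - ⟪w, x i⟫_ℝ) := hjensen
    _ = (1 / (P.card : ℝ)) * ∑ i ∈ P, l (t - ⟪w, x i⟫_ℝ) := by
        rw [← Finset.smul_sum, smul_eq_mul]
  have hreg : 0 ≤ lam / 2 * ‖w‖ ^ 2 := by positivity
  linarith
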